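/- arXiv:2407.21206 — 3 statements merged into one kernel-verified Lean document; each statement's English description precedes it below -/
import Mathlib

section
/- For every integer m ≥ 2 and n = 2m-1, the edge set of the complete bipartite graph K_{m,n} can be covered by ⌈mn/(2m+n-1)⌉ = ⌈m/2⌉ (not necessarily edge-disjoint) spanning subgraphs, each of which is a double cycle on the m black vertices with one white vertex removed. -/
open Sum

/-- A graph `G` on the vertex set `Fin m ⊕ Fin n` (black vertices `Fin m`, white vertices
`Fin n`) is a double cycle with one white vertex removed if there is a cyclic ordering of
the black vertices, given by a cyclic permutation `σ` of `Fin m` (a cycle on `2` black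
vertices being allowed for `m = 2`), such that every white vertex is adjacent to exactly
one cyclically consecutive pair `(b, σ b)` of black vertices, every such pair having
exactly two common white neighbors except one distinguished pair `(b₀, σ b₀)` which has
exactly one; there are no other edges. -/
def IsDoubleCycleMinusOneWhite (m n : ℕ) (G : SimpleGraph (Fin m ⊕ Fin n)) : Prop :=
  ∃ (σ : Equiv.Perm (Fin m)) (g : Fin n → Fin m) (b₀ : Fin m),
    σ.IsCycle ∧ σ.support = Finset.univ ∧
    (∀ b b' : Fin m, ¬ G.Adj (inl b) (inl b')) ∧
    (∀ w w' : Fin n, ¬ G.Adj (inr w) (inr w')) ∧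
    (∀ (c : Fin m) (w : Fin n),
      G.Adj (inl c) (inr w) ↔ (c = g w ∨ c = σ (g w))) ∧
    (∀ b : Fin m,
      (Finset.univ.filter (fun w : Fin n => g w = b)).card = if b = b₀ then 1 else 2)

/-- Cancellation for addition modulo `m` on residues below `m`. -/
lemma aux_mod_cancel {m a b c : ℕ} (ha : a < m) (hb : b < m)
    (h : (a + c) % m = (b + c) % m) : a = b := by
  have h' : a ≡ b [MOD m] := Nat.ModEq.add_right_cancel' c h
  have h2 := h'
  unfold Nat.ModEq at h2
  rwa [Nat.mod_eq_of_lt ha, Nat.mod_eq_of_lt hb] at h2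

/-- Solving `(x + t) % m = b` for `x < m`. -/
lemma aux_key {m : ℕ} (t b : ℕ) (hb : b < m) (x : ℕ) (hx : x < m) :
    (x + t) % m = b ↔ x = (b + (m - t % m)) % m := by
  have hm : 0 < m := lt_of_le_of_lt (Nat.zero_le _) hb
  set r := (b + (m - t % m)) % m with hr
  have hrm : r < m := Nat.mod_lt _ hm
  have htm : t % m < m := Nat.mod_lt _ hm
  have e1 : b + (m - t % m) + t % m = b + m := by omega
  have hrt : (r + t) % m = b :=
    calc (r + t) % m
        = (b + (m - t % m) + t) % m := Nat.mod_add_mod _ _ _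
      _ = (b + (m - t % m) + t % m) % m :=
          ((Nat.ModEq.add_left _ (Nat.mod_modEq t m)).symm : _)
      _ = (b + m) % m := by rw [e1]
      _ = b := by rw [Nat.add_mod_right, Nat.mod_eq_of_lt hb]
  constructor
  · intro h
    have h2 : (x + t) % m = (r + t) % m := by rw [h, hrt]
    exact aux_mod_cancel hx hrm h2
  · intro h; rw [h]; exact hrt

/-- The assignment of white vertices to black vertices in the `k`-th double cycle. -/
def auxG (p n k : ℕ) (w : Fin n) : Fin (p + 2) :=
  ⟨(w.val / 2 + 2 * k) % (p + 2), Nat.mod_lt _ (by omega)⟩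

/-- The `k`-th double cycle minus one white vertex. -/
def auxDC (p n k : ℕ) : SimpleGraph (Fin (p + 2) ⊕ Fin n) :=
  SimpleGraph.fromRel (fun x y =>
    match x, y with
    | inl b, inr w => b = auxG p n k w ∨ b = auxG p n k w + 1
    | _, _ => False)

lemma auxDC_adj_ll (p n k : ℕ) (b b' : Fin (p + 2)) :
    ¬ (auxDC p n k).Adj (inl b) (inl b') := by
  simp [auxDC, SimpleGraph.fromRel_adj]

lemma auxDC_adj_rr (p n k : ℕ) (w w' : Fin n) :
    ¬ (auxDC p n k).Adj (inr w) (inr w') := by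
  simp [auxDC, SimpleGraph.fromRel_adj]

lemma auxDC_adj (p n k : ℕ) (b : Fin (p + 2)) (w : Fin n) :
    (auxDC p n k).Adj (inl b) (inr w) ↔
      (b = auxG p n k w ∨ b = auxG p n k w + 1) := by
  simp [auxDC, SimpleGraph.fromRel_adj]

lemma aux_ceil_half (m : ℕ) : ⌈(m : ℚ) / 2⌉ = ((m + 1) / 2 : ℕ) := by
  rw [Int.ceil_eq_iff]
  have h1 : m ≤ 2 * ((m + 1) / 2) := by omega
  have h2 : 2 * ((m + 1) / 2) ≤ m + 1 := by omega
  have h1' : (m : ℚ) ≤ 2 * (((((m + 1) / 2 : ℕ) : ℤ)) : ℚ) := by exact_mod_cast h1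
  have h2' : 2 * (((((m + 1) / 2 : ℕ) : ℤ)) : ℚ) ≤ (m : ℚ) + 1 := by exact_mod_cast h2
  constructor
  · rw [lt_div_iff₀ (by norm_num : (0:ℚ) < 2)]
    linarith
  · rw [div_le_iff₀ (by norm_num : (0:ℚ) < 2)]
    linarith

/-- For every integer `m ≥ 2` and `n = 2m-1`, the edges of the complete bipartite graph
`K_{m,n}` can be covered by `⌈mn/(2m+n-1)⌉ = ⌈m/2⌉` (not necessarily edge-disjoint)
double cycles on the `m` black vertices with one white vertex removed. -/
theorem stmt_6 (m n : ℕ) (hm : 2 ≤ m) (hn : n = 2 * m - 1) :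
    ⌈((m : ℚ) * n) / (2 * m + n - 1)⌉ = ⌈(m : ℚ) / 2⌉ ∧
    ∃ F : Fin (⌈(m : ℚ) / 2⌉.toNat) → SimpleGraph (Fin m ⊕ Fin n),
      (∀ k, IsDoubleCycleMinusOneWhite m n (F k)) ∧
      ∀ (b : Fin m) (w : Fin n), ∃ k, (F k).Adj (inl b) (inr w) := by
  constructor
  ·
    congr 1
    have hne : (2 * (m : ℚ) - 1) ≠ 0 := by
      have : (2 : ℚ) ≤ (m : ℚ) := by exact_mod_cast hm
      intro h; nlinarith
    have hnq : (n : ℚ) = 2 * m - 1 := by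
      rw [hn]; push_cast [Nat.cast_sub (by omega : 1 ≤ 2 * m)]; ring
    rw [hnq]
    rw [div_eq_div_iff (by intro h; apply hne; nlinarith) (by norm_num)]
    ring
  · -- the construction
    obtain ⟨p, rfl⟩ : ∃ p, m = p + 2 := ⟨m - 2, by omega⟩
    subst hn
    have hK : (⌈((p + 2 : ℕ) : ℚ) / 2⌉.toNat) = (p + 3) / 2 := by
      rw [aux_ceil_half, Int.toNat_natCast]
    set M := p + 2 with hM
    set N := 2 * (p + 2) - 1 with hN
    have hNval : N = 2 * p + 3 := by omega
    refine ⟨fun k => auxDC p N k.val, fun k => ?_, fun b w => ?_⟩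
    · -- each graph is a double cycle minus one white vertex
      refine ⟨finRotate (p + 2), auxG p N k.val,
        ⟨(p + 1 + 2 * k.val) % (p + 2), Nat.mod_lt _ (by omega)⟩,
        isCycle_finRotate, support_finRotate, auxDC_adj_ll p N k.val,
        auxDC_adj_rr p N k.val, fun c w => ?_, fun b => ?_⟩
      · rw [auxDC_adj]
        have : finRotate (p + 2) (auxG p N k.val w) = auxG p N k.val w + 1 :=
          finRotate_succ_apply _
        rw [this]
      · -- the fiber cardinalities
        set t := 2 * k.val with ht
        set r := (b.val + (M - t % M)) % M with hr
        have hrm : r < M := Nat.mod_lt _ (by omega)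
        have hmem : ∀ w : Fin N, auxG p N k.val w = b ↔ w.val / 2 = r := by
          intro w
          rw [Fin.ext_iff]
          have hx : w.val / 2 < M := by
            have := w.isLt; omega
          exact aux_key t b.val b.isLt (w.val / 2) hx
        have hb0 : (b = (⟨(p + 1 + 2 * k.val) % (p + 2), Nat.mod_lt _ (by omega)⟩ :
            Fin (p + 2))) ↔ r = p + 1 := by
          set b₀ : Fin (p + 2) := ⟨(p + 1 + 2 * k.val) % (p + 2), Nat.mod_lt _ (by omega)⟩
          have hkey : (p + 1 + t) % M = b₀.val ↔ p + 1 = (b₀.val + (M - t % M)) % M :=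
            aux_key t b₀.val b₀.isLt (p + 1) (by omega)
          have h0 : p + 1 = (b₀.val + (M - t % M)) % M := hkey.mp rfl
          constructor
          · intro h; rw [hr, h]; exact h0.symm
          · intro h
            have h2 : (b.val + (M - t % M)) % M = (b₀.val + (M - t % M)) % M := by
              rw [← hr, h, h0]
            exact Fin.ext (aux_mod_cancel b.isLt b₀.isLt h2)
        by_cases hcase : r = p + 1
        · rw [if_pos (hb0.mpr hcase)]
          have : (Finset.univ.filter (fun w : Fin N => auxG p N k.val w = b)) =
              {(⟨2 * p + 2, by omega⟩ : Fin N)} := by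
            ext w
            rw [Finset.mem_filter]
            simp only [Finset.mem_univ, true_and, Finset.mem_singleton, hmem w, hcase,
              Fin.ext_iff]
            have := w.isLt
            omega
          rw [this, Finset.card_singleton]
        · rw [if_neg (fun h => hcase (hb0.mp h))]
          have hrp : r ≤ p := by omega
          have : (Finset.univ.filter (fun w : Fin N => auxG p N k.val w = b)) =
              {(⟨2 * r, by omega⟩ : Fin N), (⟨2 * r + 1, by omega⟩ : Fin N)} := by
            ext w
            rw [Finset.mem_filter]
            simp only [Finset.mem_univ, true_and, Finset.mem_insert, Finset.mem_singleton,
              hmem w, Fin.ext_iff]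
            have := w.isLt
            omega
          rw [this, Finset.card_insert_of_notMem (by simp [Fin.ext_iff]), Finset.card_singleton]
    · -- coverage
      set j := (b.val + (M - (w.val / 2) % M)) % M with hj
      have hjm : j < M := Nat.mod_lt _ (by omega)
      have hwx : w.val / 2 < M := by have := w.isLt; omega
      have hcov : (j + w.val / 2) % M = b.val :=
        (aux_key (w.val / 2) b.val b.isLt j hjm).mpr hj
      have hjK : j / 2 < ⌈((p + 2 : ℕ) : ℚ) / 2⌉.toNat := by
        rw [hK]; omega
      refine ⟨⟨j / 2, hjK⟩, ?_⟩
      rw [auxDC_adj]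
      by_cases hpar : j % 2 = 0
      · left
        apply Fin.ext
        show b.val = (w.val / 2 + 2 * (j / 2)) % M
        have : 2 * (j / 2) = j := by omega
        rw [this, Nat.add_comm, hcov]
      · right
        apply Fin.ext
        have hval : (auxG p N (j / 2) w + 1).val =
            ((w.val / 2 + 2 * (j / 2)) % M + 1) % M := by
          rw [Fin.add_def]
          rfl
        rw [hval, Nat.mod_add_mod]
        have : w.val / 2 + 2 * (j / 2) + 1 = j + w.val / 2 := by omega
        rw [this, hcov]
end

section
/- For all integers m ≥ 3 and n ≥ 2m, setting ℓ = ⌈mn/(2m+n)⌉, there exist integers d_1, …, d_m such that d_i ≥ 4 for every i, d_1 + ⋯ + d_m = 2m + n, and for every starting index i, the sum of any ℓ cyclically consecutive values d_{i+1} + d_{i+2} + ⋯ + d_{i+ℓ} (indices taken modulo m) is at least n. -/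
lemma ediv_superadd (m : ℤ) (hm : 0 < m) (a b : ℤ) : a / m + b / m ≤ (a + b) / m := by
  rw [Int.le_ediv_iff_mul_le hm, add_mul]
  have h1 := Int.ediv_mul_le a (ne_of_gt hm)
  have h2 := Int.ediv_mul_le b (ne_of_gt hm)
  omega

/-- For integers `m ≥ 3` and `n ≥ 2m`, setting `ℓ = ⌈mn/(2m+n)⌉`, there exist integers
`d_1, …, d_m` (encoded as an `m`-periodic function `d : ℕ → ℤ`) with `d_i ≥ 4` for every
`i`, `d_1 + ⋯ + d_m = 2m + n`, and such that every sum of `ℓ` cyclically consecutive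
values `d_{i+1} + ⋯ + d_{i+ℓ}` is at least `n`. -/
theorem stmt_7 (m n : ℕ) (hm : 3 ≤ m) (hn : 2 * m ≤ n) :
    ∃ d : ℕ → ℤ,
      (∀ i, d (i + m) = d i) ∧
      (∀ i, 4 ≤ d i) ∧
      (∑ i ∈ Finset.range m, d i) = 2 * m + n ∧
      ∀ i : ℕ,
        (n : ℤ) ≤ ∑ j ∈ Finset.range (⌈((m : ℚ) * n) / (2 * m + n)⌉.toNat), d (i + 1 + j) := by
  have hm0 : (0 : ℤ) < (m : ℤ) := by exact_mod_cast (by omega : 0 < m)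
  set c : ℤ := 2 * m + n with hc
  have hc4 : 4 * m ≤ c := by push_cast; push_cast at hn; omega
  set f : ℕ → ℤ := fun j => ((j : ℤ) * c) / m with hf
  refine ⟨fun j => f (j + 1) - f j, ?_, ?_, ?_, ?_⟩
  · intro i
    have key : ∀ j : ℕ, f (j + m) = f j + c := by
      intro j
      simp only [hf]
      push_cast
      rw [add_mul, Int.add_mul_ediv_left _ _ (ne_of_gt hm0)]
    show f (i + m + 1) - f (i + m) = f (i + 1) - f i
    have h1 : i + m + 1 = i + 1 + m := by ring
    rw [h1, key, key]; ring
  · intro i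
    have h1 : f i + c / m ≤ f (i + 1) := by
      simp only [hf]; push_cast
      calc (i : ℤ) * c / m + c / m ≤ ((i : ℤ) * c + c) / m := ediv_superadd _ hm0 _ _
        _ = ((i : ℤ) + 1) * c / m := by ring_nf
    have h2 : (4 : ℤ) ≤ c / m := by
      rw [Int.le_ediv_iff_mul_le hm0]; linarith
    show (4:ℤ) ≤ f (i + 1) - f i
    omega
  · rw [Finset.sum_range_sub f]
    simp only [hf]
    push_cast
    rw [zero_mul, Int.zero_ediv, Int.mul_ediv_cancel_left _ (ne_of_gt hm0)]
    omega
  · intro i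
    set l : ℕ := (⌈((m : ℚ) * n) / (2 * m + n)⌉).toNat with hl
    have hsum : ∑ j ∈ Finset.range l, (f (i + 1 + j + 1) - f (i + 1 + j))
        = f (i + 1 + l) - f (i + 1) := by
      have := Finset.sum_range_sub (fun j => f (i + 1 + j)) l
      simpa [add_assoc] using this
    have heq : ∀ j ∈ Finset.range l, f (i + 1 + j + 1) - f (i + 1 + j)
        = (fun k => f (k + 1) - f k) (i + 1 + j) := by intro j _; rfl
    rw [show (∑ j ∈ Finset.range l, (f (i + 1 + j + 1) - f (i + 1 + j)))
        = ∑ j ∈ Finset.range l, (f (i + 1 + j + 1) - f (i + 1 + j)) from rfl] at hsum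
    have hsum' : ∑ j ∈ Finset.range l, (f (i + 1 + j + 1) - f (i + 1 + j))
        = f (i + 1 + l) - f (i + 1) := hsum
    -- main bound: n*m ≤ l*c
    have hcQ : (0 : ℚ) < 2 * m + n := by positivity
    have hceil : ((m : ℚ) * n) / (2 * m + n) ≤ (⌈((m : ℚ) * n) / (2 * m + n)⌉ : ℚ) :=
      Int.le_ceil _
    have hpos : 0 ≤ ⌈((m : ℚ) * n) / (2 * m + n)⌉ := by
      apply Int.ceil_nonneg; positivity
    have hlZ : ((l : ℤ)) = ⌈((m : ℚ) * n) / (2 * m + n)⌉ := by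
      simp [hl, Int.toNat_of_nonneg hpos]
    have hmain : (n : ℤ) * m ≤ (l : ℤ) * c := by
      have : ((m : ℚ) * n) ≤ (l : ℚ) * (2 * m + n) := by
        rw [div_le_iff₀ hcQ] at hceil
        calc ((m : ℚ) * n) ≤ (⌈((m : ℚ) * n) / (2 * m + n)⌉ : ℚ) * (2 * m + n) := hceil
          _ = (l : ℚ) * (2 * m + n) := by
              congr 1
              exact_mod_cast hlZ.symm
      have : ((n : ℤ) * m : ℚ) ≤ ((l : ℤ) * c : ℚ) := by push_cast [hc]; linarith
      exact_mod_cast this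
    have hwin : (n : ℤ) ≤ f (i + 1 + l) - f (i + 1) := by
      have h1 : f (i + 1) + ((l : ℤ) * c) / m ≤ f (i + 1 + l) := by
        simp only [hf]; push_cast
        calc ((i : ℤ) + 1) * c / m + (l : ℤ) * c / m
            ≤ (((i : ℤ) + 1) * c + (l : ℤ) * c) / m := ediv_superadd _ hm0 _ _
          _ = ((i : ℤ) + 1 + l) * c / m := by ring_nf
      have h2 : (n : ℤ) ≤ ((l : ℤ) * c) / m := by
        rw [Int.le_ediv_iff_mul_le hm0]; linarith
      omega
    calc (n : ℤ) ≤ f (i + 1 + l) - f (i + 1) := hwin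
      _ = ∑ j ∈ Finset.range l, (f (i + 1 + j + 1) - f (i + 1 + j)) := hsum'.symm
      _ = ∑ j ∈ Finset.range l, (fun k => f (k + 1) - f k) (i + 1 + j) := by
          exact Finset.sum_congr rfl heq
end

section
/- Let n, m, e, f be real numbers satisfying n − e + f = 2 and e·(2e − 3f) ≥ m − e. Then (3n−5)² ≥ 4m and e ≤ (3n−5 + √((3n−5)² − 4m))/2. -/
/-- If real numbers `n, m, e, f` satisfy Euler's formula `n - e + f = 2` and the
face-counting inequality `e(2e - 3f) ≥ m - e`, then `(3n-5)² ≥ 4m` and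
`e ≤ (3n-5 + √((3n-5)² - 4m))/2`. -/
theorem stmt_9 (n m e f : ℝ) (h1 : n - e + f = 2) (h2 : m - e ≤ e * (2 * e - 3 * f)) :
    4 * m ≤ (3 * n - 5) ^ 2 ∧
    e ≤ (3 * n - 5 + Real.sqrt ((3 * n - 5) ^ 2 - 4 * m)) / 2 := by
  have hf : f = 2 - n + e := by linarith
  subst hf
  have key : (3 * n - 5 - 2 * e) ^ 2 ≤ (3 * n - 5) ^ 2 - 4 * m := by nlinarith
  have h0 : (0:ℝ) ≤ (3 * n - 5 - 2 * e) ^ 2 := sq_nonneg _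
  constructor
  · nlinarith
  · have hs : |3 * n - 5 - 2 * e| ≤ Real.sqrt ((3 * n - 5) ^ 2 - 4 * m) := by
      rw [← Real.sqrt_sq_eq_abs]
      exact Real.sqrt_le_sqrt key
    have h2e : 2 * e - (3 * n - 5) ≤ |3 * n - 5 - 2 * e| := by
      rw [abs_sub_comm]; exact le_abs_self _
    linarith
end
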